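/- Let E be a real Hilbert space, f : E → ℝ differentiable, μ-strongly convex with μ > 0 and L-smooth (∇f is L-Lipschitz). Then for every γ > 0 and all x, y ∈ E: ‖(x − γ∇f(x)) − (y − γ∇f(y))‖² ≤ (1 − 2γμL/(μ+L))‖x − y‖² − γ(2/(μ+L) − γ)‖∇f(x) − ∇f(y)‖². -/

import Mathlib

open InnerProductSpace

local notation "⟪" a ", " b "⟫" => @inner ℝ _ _ a b

theorem aux_line_deriv {E : Type*} [NormedAddCommGroup E] [InnerProductSpace ℝ E] [CompleteSpace E]
    (f : E → ℝ) (f' : E → E) (hdiff : ∀ x, HasGradientAt f (f' x) x)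
    (x d : E) (t : ℝ) :
    HasDerivAt (fun s : ℝ => f (x + s • d)) ⟪f' (x + t • d), d⟫ t := by
  have hline : HasDerivAt (fun s : ℝ => x + s • d) d t := by
    simpa using ((hasDerivAt_id t).smul_const d).const_add x
  have := ((hdiff (x + t • d)).hasFDerivAt.comp_hasDerivAt t hline)
  simp [InnerProductSpace.toDual_apply_apply] at this
  exact this

theorem aux_descent {E : Type*} [NormedAddCommGroup E] [InnerProductSpace ℝ E] [CompleteSpace E]
    (f : E → ℝ) (f' : E → E) (L : ℝ)
    (hdiff : ∀ x, HasGradientAt f (f' x) x)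
    (hsmooth : ∀ x y, ‖f' x - f' y‖ ≤ L * ‖x - y‖)
    (x y : E) : f y ≤ f x + ⟪f' x, y - x⟫ + L / 2 * ‖y - x‖ ^ 2 := by
  set d := y - x with hd
  set φ : ℝ → ℝ := fun s => f (x + s • d) - s * ⟪f' x, d⟫ - L * s ^ 2 / 2 * ‖d‖ ^ 2 with hφ
  have hder : ∀ t : ℝ, HasDerivAt φ
      (⟪f' (x + t • d), d⟫ - ⟪f' x, d⟫ - L * t * ‖d‖ ^ 2) t := by
    intro t
    have h1 := aux_line_deriv f f' hdiff x d t
    have h2 : HasDerivAt (fun s : ℝ => s * ⟪f' x, d⟫ + L * s ^ 2 / 2 * ‖d‖ ^ 2)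
        (⟪f' x, d⟫ + L * t * ‖d‖ ^ 2) t := by
      have ha : HasDerivAt (fun s : ℝ => s * ⟪f' x, d⟫) (⟪f' x, d⟫) t := by
        simpa using (hasDerivAt_id t).mul_const (⟪f' x, d⟫)
      have hb : HasDerivAt (fun s : ℝ => L * s ^ 2 / 2 * ‖d‖ ^ 2)
          (L * t * ‖d‖ ^ 2) t := by
        have := (hasDerivAt_pow 2 t).const_mul L
        have := (this.div_const 2).mul_const (‖d‖ ^ 2)
        convert this using 1
        · rfl
        · rfl
        ring
      exact ha.add hb
    have := h1.sub h2
    convert this using 1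
    · rfl
    · rfl
    · funext s; simp [hφ]; ring
    · ring
  have hanti : AntitoneOn φ (Set.Icc (0:ℝ) 1) := by
    apply antitoneOn_of_deriv_nonpos (convex_Icc 0 1)
    · exact fun t _ => ((hder t).continuousAt).continuousWithinAt
    · exact fun t _ => ((hder t).differentiableAt).differentiableWithinAt
    · intro t ht
      rw [interior_Icc] at ht
      rw [(hder t).deriv]
      have h3 : ⟪f' (x + t • d) - f' x, d⟫ ≤ ‖f' (x + t • d) - f' x‖ * ‖d‖ :=
        real_inner_le_norm _ _
      have h4 : ‖f' (x + t • d) - f' x‖ ≤ L * (t * ‖d‖) := by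
        have := hsmooth (x + t • d) x
        simpa [norm_smul, abs_of_pos ht.1, mul_assoc] using this
      have h5 : ‖f' (x + t • d) - f' x‖ * ‖d‖ ≤ L * (t * ‖d‖) * ‖d‖ :=
        mul_le_mul_of_nonneg_right h4 (norm_nonneg d)
      have h6 : ⟪f' (x + t • d) - f' x, d⟫ = ⟪f' (x + t • d), d⟫ - ⟪f' x, d⟫ :=
        inner_sub_left _ _ _
      nlinarith [h3, h5]
  have h01 := hanti (Set.left_mem_Icc.2 zero_le_one) (Set.right_mem_Icc.2 zero_le_one)
    zero_le_one
  have h0 : φ 0 = f x := by simp [hφ]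
  have h1 : φ 1 = f y - ⟪f' x, d⟫ - L / 2 * ‖d‖ ^ 2 := by
    simp [hφ, hd]
  rw [h0, h1] at h01
  linarith

theorem aux_tangent {E : Type*} [NormedAddCommGroup E] [InnerProductSpace ℝ E] [CompleteSpace E]
    (f : E → ℝ) (f' : E → E) (μ : ℝ)
    (hdiff : ∀ x, HasGradientAt f (f' x) x)
    (hsconv : ConvexOn ℝ Set.univ (fun x => f x - μ / 2 * ‖x‖ ^ 2))
    (x y : E) : f x + ⟪f' x, y - x⟫ + μ / 2 * ‖y - x‖ ^ 2 ≤ f y := by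
  set d := y - x with hd
  set g : ℝ → ℝ := fun s => f (x + s • d) - μ / 2 * ‖x + s • d‖ ^ 2 with hg
  have hgconv : ConvexOn ℝ Set.univ g := by
    have := hsconv.comp_affineMap (AffineMap.lineMap x (x + d) : ℝ →ᵃ[ℝ] E)
    have hpre : (AffineMap.lineMap x (x + d) : ℝ →ᵃ[ℝ] E) ⁻¹' Set.univ = Set.univ :=
      Set.preimage_univ
    rw [hpre] at this
    convert this using 1
    · rfl
    · rfl
    · rfl
    · rfl
    funext s
    simp [hg, AffineMap.lineMap_apply, add_comm]
  have hexp : ∀ s : ℝ, ‖x + s • d‖ ^ 2 = ‖x‖ ^ 2 + 2 * s * ⟪x, d⟫ + s ^ 2 * ‖d‖ ^ 2 := by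
    intro s
    rw [norm_add_sq_real, real_inner_smul_right, norm_smul]
    simp [mul_pow, sq_abs]
    ring
  have hgder : HasDerivAt g (⟪f' x, d⟫ - μ * ⟪x, d⟫) 0 := by
    have h1 := aux_line_deriv f f' hdiff x d 0
    rw [zero_smul, add_zero] at h1
    have h2 : HasDerivAt (fun s : ℝ => μ / 2 * ‖x + s • d‖ ^ 2) (μ * ⟪x, d⟫) 0 := by
      have : HasDerivAt (fun s : ℝ => μ / 2 * (‖x‖ ^ 2 + 2 * s * ⟪x, d⟫ + s ^ 2 * ‖d‖ ^ 2))
          (μ * ⟪x, d⟫) 0 := by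
        have ha : HasDerivAt (fun s : ℝ => ‖x‖ ^ 2 + 2 * s * ⟪x, d⟫ + s ^ 2 * ‖d‖ ^ 2)
            (2 * ⟪x, d⟫ + 2 * 0 * ‖d‖ ^ 2) 0 := by
          have hb : HasDerivAt (fun s : ℝ => 2 * s * ⟪x, d⟫) (2 * ⟪x, d⟫) 0 := by
            simpa using (((hasDerivAt_id (0:ℝ)).const_mul 2).mul_const (⟪x, d⟫))
          have hc : HasDerivAt (fun s : ℝ => s ^ 2 * ‖d‖ ^ 2) (2 * 0 * ‖d‖ ^ 2) 0 := by
            simpa using ((hasDerivAt_pow 2 (0:ℝ)).mul_const (‖d‖ ^ 2))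
          exact (((hasDerivAt_const (0:ℝ) (‖x‖ ^ 2)).add hb).add hc).congr_deriv (by simp)
        have := ha.const_mul (μ / 2)
        convert this using 1
        · rfl
        · rfl
        ring
      convert this using 2 with s
      rw [hexp s]
    exact h1.sub h2
  have hslope := hgconv.le_slope_of_hasDerivAt (Set.mem_univ (0:ℝ)) (Set.mem_univ (1:ℝ))
    zero_lt_one hgder
  rw [slope_def_field] at hslope
  have hg0 : g 0 = f x - μ / 2 * ‖x‖ ^ 2 := by simp [hg]
  have hg1 : g 1 = f y - μ / 2 * ‖y‖ ^ 2 := by simp [hg, hd]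
  have hy2 : ‖y‖ ^ 2 = ‖x‖ ^ 2 + 2 * ⟪x, d⟫ + ‖d‖ ^ 2 := by
    have := hexp 1
    simpa [hd] using this
  rw [hg0, hg1, hy2] at hslope
  simp at hslope
  linarith

set_option maxHeartbeats 1000000

/-- contraction/cocoercivity inequality for the gradient step of a
`μ`-strongly convex (`μ > 0`) and `L`-smooth differentiable function on a real
Hilbert space. -/
theorem dave_rpg_strongly_convex_gradient_step_inequality
    {E : Type*} [NormedAddCommGroup E] [InnerProductSpace ℝ E] [CompleteSpace E]
    (f : E → ℝ) (f' : E → E) (μ L : ℝ) (hμ : 0 < μ)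
    (hdiff : ∀ x, HasGradientAt f (f' x) x)
    (hsconv : ConvexOn ℝ Set.univ (fun x => f x - μ / 2 * ‖x‖ ^ 2))
    (hsmooth : ∀ x y, ‖f' x - f' y‖ ≤ L * ‖x - y‖)
    (γ : ℝ) (hγ : 0 < γ) (x y : E) :
    ‖x - γ • f' x - (y - γ • f' y)‖ ^ 2 ≤
      (1 - 2 * γ * μ * L / (μ + L)) * ‖x - y‖ ^ 2
        - γ * (2 / (μ + L) - γ) * ‖f' x - f' y‖ ^ 2 := by
  have A1 : ∀ a b : E, f a + ⟪f' a, b - a⟫ + μ / 2 * ‖b - a‖ ^ 2 ≤ f b :=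
    aux_tangent f f' μ hdiff hsconv
  have A2 : ∀ a b : E, f b ≤ f a + ⟪f' a, b - a⟫ + L / 2 * ‖b - a‖ ^ 2 :=
    aux_descent f f' L hdiff hsmooth
  by_cases hxy : x = y
  · subst hxy
    simp
  -- notation
  set D := x - y with hD
  set G := f' x - f' y with hG
  clear_value D G
  have hDpos : 0 < ‖D‖ := by
    rw [hD, norm_pos_iff, sub_ne_zero]; exact hxy
  -- star inequality
  have star : ∀ (a b : E) (t : ℝ),
      t * ‖(f' b - f' a) - μ • (b - a)‖ ^ 2
        - (L - μ) * t ^ 2 / 2 * ‖(f' b - f' a) - μ • (b - a)‖ ^ 2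
      ≤ f b - f a - ⟪f' a, b - a⟫ - μ / 2 * ‖b - a‖ ^ 2 := by
    intro a b t
    set u := (f' b - f' a) - μ • (b - a) with hu
    set z := b - t • u with hz
    have h1 := A1 a z
    have h2 := A2 b z
    have e1 : z - a = (b - a) - t • u := by rw [hz]; abel
    have e2 : z - b = -(t • u) := by rw [hz]; abel
    have hza : ⟪f' a, z - a⟫ = ⟪f' a, b - a⟫ - t * ⟪f' a, u⟫ := by
      rw [e1, inner_sub_right, real_inner_smul_right]
    have hzb : ⟪f' b, z - b⟫ = -(t * ⟪f' b, u⟫) := by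
      rw [e2, inner_neg_right, real_inner_smul_right]
    have htu : ‖t • u‖ ^ 2 = t ^ 2 * ‖u‖ ^ 2 := by
      rw [norm_smul]; simp [mul_pow, sq_abs]
    have hnza : ‖z - a‖ ^ 2 = ‖b - a‖ ^ 2 - 2 * (t * ⟪b - a, u⟫) + t ^ 2 * ‖u‖ ^ 2 := by
      rw [e1, norm_sub_sq_real, real_inner_smul_right, htu]
    have hnzb : ‖z - b‖ ^ 2 = t ^ 2 * ‖u‖ ^ 2 := by
      rw [e2, norm_neg, htu]
    have hkey : ⟪f' b, u⟫ - ⟪f' a, u⟫ - μ * ⟪b - a, u⟫ = ‖u‖ ^ 2 := by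
      rw [← real_inner_self_eq_norm_sq]
      nth_rewrite 4 [hu]
      simp only [inner_sub_left, real_inner_smul_left]
    rw [hza, hnza] at h1
    rw [hzb, hnzb] at h2
    have hkt : t * (⟪f' b, u⟫ - ⟪f' a, u⟫ - μ * ⟪b - a, u⟫) = t * ‖u‖ ^ 2 := by
      rw [hkey]
    nlinarith [h1, h2, hkt]
  -- strong monotonicity and μ ≤ L
  have hmono : μ * ‖D‖ ^ 2 ≤ ⟪G, D⟫ := by
    have h1 := A1 x y
    have h2 := A1 y x
    have e1 : y - x = -D := by rw [hD]; abel
    have e2 : ‖y - x‖ = ‖D‖ := by rw [e1, norm_neg]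
    have e3 : ⟪G, D⟫ = ⟪f' x, D⟫ - ⟪f' y, D⟫ := by rw [hG, inner_sub_left]
    rw [e1, inner_neg_right, norm_neg] at h1
    rw [← hD] at h2
    linarith
  have hμL : μ ≤ L := by
    have h1 : ⟪G, D⟫ ≤ ‖G‖ * ‖D‖ := real_inner_le_norm _ _
    have h2 : ‖G‖ ≤ L * ‖D‖ := by rw [hG, hD]; exact hsmooth x y
    have h3 : ‖G‖ * ‖D‖ ≤ L * ‖D‖ * ‖D‖ := mul_le_mul_of_nonneg_right h2 (norm_nonneg _)
    have hDsq : 0 < ‖D‖ ^ 2 := by positivity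
    nlinarith [hmono, h1, h3, hDsq]
  -- cocoercivity of the convex part
  set u := G - μ • D with hu
  have hsum : ∀ t : ℝ, 2 * t * ‖u‖ ^ 2 - (L - μ) * t ^ 2 * ‖u‖ ^ 2
      ≤ ⟪G, D⟫ - μ * ‖D‖ ^ 2 := by
    intro t
    have s1 := star y x t
    have s2 := star x y t
    have e0 : x - y = D := hD.symm
    have e1 : y - x = -D := by rw [hD]; abel
    have eu1 : (f' x - f' y) - μ • (x - y) = u := by rw [hu, hG, hD]
    have eu2 : (f' y - f' x) - μ • (y - x) = -u := by
      rw [hu, hG, hD, show y - x = -(x - y) from by abel, smul_neg]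
      abel
    rw [eu1, e0] at s1
    rw [eu2, e1, norm_neg, inner_neg_right, norm_neg] at s2
    have e3 : ⟪f' x, D⟫ - ⟪f' y, D⟫ = ⟪G, D⟫ := by rw [hG, inner_sub_left]
    linarith
  have hco : ‖u‖ ^ 2 ≤ (L - μ) * (⟪G, D⟫ - μ * ‖D‖ ^ 2) := by
    rcases eq_or_lt_of_le hμL with heq | hlt
    · have hu0 : ‖u‖ ^ 2 ≤ 0 := by
        by_contra hpos
        push_neg at hpos
        have ht := hsum ((⟪G, D⟫ - μ * ‖D‖ ^ 2 + 1) / (2 * ‖u‖ ^ 2))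
        rw [← heq] at ht
        have : 2 * ((⟪G, D⟫ - μ * ‖D‖ ^ 2 + 1) / (2 * ‖u‖ ^ 2)) * ‖u‖ ^ 2
            = ⟪G, D⟫ - μ * ‖D‖ ^ 2 + 1 := by
          have hu0 : ‖u‖ ≠ 0 := fun h => by simp [h] at hpos
          field_simp
        nlinarith [ht, this]
      have : ‖u‖ ^ 2 = 0 := le_antisymm hu0 (sq_nonneg _)
      rw [this]
      nlinarith [hmono]
    · have hpos : 0 < L - μ := by linarith
      have ht := hsum (1 / (L - μ))
      have hne : L - μ ≠ 0 := ne_of_gt hpos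
      have heq2 : 2 * (1 / (L - μ)) * ‖u‖ ^ 2 - (L - μ) * (1 / (L - μ)) ^ 2 * ‖u‖ ^ 2
          = ‖u‖ ^ 2 / (L - μ) := by
        field_simp
        ring
      rw [heq2] at ht
      calc ‖u‖ ^ 2 = ‖u‖ ^ 2 / (L - μ) * (L - μ) := by field_simp
        _ ≤ (⟪G, D⟫ - μ * ‖D‖ ^ 2) * (L - μ) := mul_le_mul_of_nonneg_right ht (le_of_lt hpos)
        _ = (L - μ) * (⟪G, D⟫ - μ * ‖D‖ ^ 2) := by ring
  -- key inequality
  have hnu : ‖u‖ ^ 2 = ‖G‖ ^ 2 - 2 * (μ * ⟪G, D⟫) + μ ^ 2 * ‖D‖ ^ 2 := by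
    rw [hu, norm_sub_sq_real, real_inner_smul_right, norm_smul]
    simp [mul_pow, sq_abs]
  have key : μ * L * ‖D‖ ^ 2 + ‖G‖ ^ 2 ≤ (μ + L) * ⟪G, D⟫ := by nlinarith [hco, hnu]
  -- final assembly
  have hML : 0 < μ + L := by linarith
  have hgoalL : x - γ • f' x - (y - γ • f' y) = D - γ • G := by
    rw [hD, hG, smul_sub]; abel
  have hLHS : ‖x - γ • f' x - (y - γ • f' y)‖ ^ 2
      = ‖D‖ ^ 2 - 2 * (γ * ⟪G, D⟫) + γ ^ 2 * ‖G‖ ^ 2 := by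
    rw [hgoalL, norm_sub_sq_real, real_inner_smul_right, norm_smul, real_inner_comm]
    simp [mul_pow, sq_abs]
  have hmain : 2 * γ * (μ * L * ‖D‖ ^ 2 + ‖G‖ ^ 2) ≤ 2 * γ * ((μ + L) * ⟪G, D⟫) :=
    mul_le_mul_of_nonneg_left key (by positivity)
  have hdiv : (2 * γ * μ * L * ‖D‖ ^ 2 + 2 * γ * ‖G‖ ^ 2) / (μ + L) ≤ 2 * γ * ⟪G, D⟫ := by
    rw [div_le_iff₀ hML]
    nlinarith [hmain]
  have hMLne : μ + L ≠ 0 := ne_of_gt hML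
  have hexp2 : (1 - 2 * γ * μ * L / (μ + L)) * ‖D‖ ^ 2
        - γ * (2 / (μ + L) - γ) * ‖G‖ ^ 2
      = ‖D‖ ^ 2 + γ ^ 2 * ‖G‖ ^ 2
        - (2 * γ * μ * L * ‖D‖ ^ 2 + 2 * γ * ‖G‖ ^ 2) / (μ + L) := by
    field_simp
    ring
  rw [hLHS, hexp2]
  linarith
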